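/- For the stationary front, the bound on the kernel of L₋: if L₋ = −ε^{−2}Δ − μ_M − |φ̃| + |φ̃|² on ℓ²(ℤ) and φ̃(n) > 0 for all n with L₋φ̃ = 0, and φ̃ ∈ ℓ^∞(ℤ) but φ̃ ∉ ℓ²(ℤ) (since φ̃(n) → 2/3 as n → +∞), then 0 is not an ℓ² eigenvalue arising from φ̃, and by positivity of φ̃, L₋ has no negative eigenvalues (n₋ = 0). -/

import Mathlib

noncomputable section

/-- The discrete Laplacian on sequences over `ℤ`. -/
def discLap (u : ℤ → ℝ) (n : ℤ) : ℝ := u (n + 1) + u (n - 1) - 2 * u n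

/-- The operator `L₋ = −ε⁻²Δ − μ_M − |φ̃| + |φ̃|²` (acting pointwise on sequences),
with `μ_M = −2/9`. -/
def Lminus (ε : ℝ) (φt : ℤ → ℝ) (u : ℤ → ℝ) (n : ℤ) : ℝ :=
  -(ε^2)⁻¹ * discLap u n - (-(2/9)) * u n - |φt n| * u n + (φt n)^2 * u n

namespace NoNegEV

open Filter

/-- The discrete Wronskian of `φt` and `u`. -/
def Wr (φt u : ℤ → ℝ) (n : ℤ) : ℝ := φt n * u (n + 1) - φt (n + 1) * u n

lemma step (ε α : ℝ) (hε : 0 < ε) (φt u : ℤ → ℝ) (hpos : ∀ n, 0 < φt n)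
    (hker : ∀ n, Lminus ε φt φt n = 0)
    (heq : ∀ n, Lminus ε φt u n = α * u n) (n : ℤ) :
    Wr φt u n = Wr φt u (n - 1) + (-(ε^2) * α) * (φt n * u n) := by
  have e1 := hker n
  have e2 := heq n
  unfold Lminus discLap at e1 e2
  rw [abs_of_pos (hpos n)] at e1 e2
  have h2 : (ε^2) ≠ 0 := by positivity
  unfold Wr
  simp only [show n - 1 + 1 = n from by ring]
  field_simp at e1 e2
  linear_combination (u n * e1 - φt n * e2) / 9

lemma mono (ε α : ℝ) (φt u : ℤ → ℝ) (hε : 0 < ε) (hα : α < 0) (hpos : ∀ n, 0 < φt n)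
    (hker : ∀ n, Lminus ε φt φt n = 0)
    (heq : ∀ n, Lminus ε φt u n = α * u n)
    (m : ℤ) : ∀ n, m ≤ n → (∀ k, m < k → k ≤ n → 0 < u k) → Wr φt u m ≤ Wr φt u n := by
  refine Int.le_induction
    (motive := fun n _ => (∀ k, m < k → k ≤ n → 0 < u k) → Wr φt u m ≤ Wr φt u n)
    (fun _ => le_refl _) ?_
  intro n hmn ih hu
  have h1 : Wr φt u m ≤ Wr φt u n :=
    ih (fun k hk1 hk2 => hu k hk1 (by omega))
  have h2 := step ε α hε φt u hpos hker heq (n + 1)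
  simp only [add_sub_cancel_right] at h2
  have hc : 0 < -(ε^2) * α := by
    have : 0 < ε^2 := by positivity
    nlinarith
  have hun : 0 < u (n+1) := hu (n+1) (by omega) (by omega)
  nlinarith [hpos (n+1), mul_pos hc (mul_pos (hpos (n+1)) hun)]

lemma tendsto_zero_of_sq_summable (u : ℤ → ℝ) (hsum : Summable (fun n : ℤ => (u n)^2)) :
    Tendsto u atTop (nhds 0) ∧ Tendsto u atBot (nhds 0) := by
  have h0 : Tendsto (fun n : ℤ => (u n)^2) cofinite (nhds 0) :=
    hsum.tendsto_cofinite_zero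
  rw [Int.cofinite_eq] at h0
  have habs : ∀ l : Filter ℤ, Tendsto (fun n : ℤ => (u n)^2) l (nhds 0) →
      Tendsto u l (nhds 0) := by
    intro l h
    rw [tendsto_zero_iff_norm_tendsto_zero]
    have := (Real.continuous_sqrt.tendsto 0).comp h
    simp only [Real.sqrt_zero] at this
    refine this.congr fun n => ?_
    simp [Real.sqrt_sq_eq_abs]
  exact ⟨habs _ (h0.mono_left le_sup_right), habs _ (h0.mono_left le_sup_left)⟩

lemma tendsto_Wr_zero (φt u : ℤ → ℝ) (M : ℝ) (hM : ∀ n, |φt n| ≤ M) (l : Filter ℤ)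
    (hu : Tendsto u l (nhds 0)) (hu1 : Tendsto (fun n : ℤ => u (n+1)) l (nhds 0)) :
    Tendsto (Wr φt u) l (nhds 0) := by
  refine squeeze_zero_norm (a := fun n : ℤ => M * ‖u (n+1)‖ + M * ‖u n‖) (fun n => ?_) ?_
  · show ‖φt n * u (n + 1) - φt (n + 1) * u n‖ ≤ M * ‖u (n+1)‖ + M * ‖u n‖
    have h1 : ‖φt n * u (n+1)‖ ≤ M * ‖u (n+1)‖ := by
      rw [norm_mul]
      exact mul_le_mul_of_nonneg_right (hM n) (norm_nonneg _)
    have h2 : ‖φt (n+1) * u n‖ ≤ M * ‖u n‖ := by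
      rw [norm_mul]
      exact mul_le_mul_of_nonneg_right (hM (n+1)) (norm_nonneg _)
    calc ‖φt n * u (n + 1) - φt (n + 1) * u n‖
        ≤ ‖φt n * u (n+1)‖ + ‖φt (n+1) * u n‖ := norm_sub_le _ _
      _ ≤ _ := add_le_add h1 h2
  · have : Tendsto (fun n : ℤ => M * ‖u (n+1)‖ + M * ‖u n‖) l
        (nhds (M * ‖(0:ℝ)‖ + M * ‖(0:ℝ)‖)) :=
      (tendsto_const_nhds.mul hu1.norm).add (tendsto_const_nhds.mul hu.norm)
    simpa using this

/-- The main contradiction: a nonzero square-summable eigenvector of a negative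
eigenvalue, positive at some point, cannot exist. -/
lemma no_neg (ε α : ℝ) (hε : 0 < ε) (hα : α < 0) (φt u : ℤ → ℝ)
    (hpos : ∀ n, 0 < φt n) (hbdd : ∃ M : ℝ, ∀ n, |φt n| ≤ M)
    (hker : ∀ n, Lminus ε φt φt n = 0)
    (heq : ∀ n, Lminus ε φt u n = α * u n)
    (hsum : Summable (fun n : ℤ => (u n)^2)) (n₀ : ℤ) (hu0 : 0 < u n₀) : False := by
  obtain ⟨M, hM⟩ := hbdd
  obtain ⟨htopu, hbotu⟩ := tendsto_zero_of_sq_summable u hsum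
  have hshift_top : Tendsto (fun n : ℤ => u (n+1)) atTop (nhds 0) :=
    htopu.comp (tendsto_atTop_add_const_right atTop 1 tendsto_id)
  have hshift_bot : Tendsto (fun n : ℤ => u (n+1)) atBot (nhds 0) :=
    hbotu.comp (tendsto_atBot_add_const_right atBot 1 tendsto_id)
  have hWtop : Tendsto (Wr φt u) atTop (nhds 0) :=
    tendsto_Wr_zero φt u M hM atTop htopu hshift_top
  have hWbot : Tendsto (Wr φt u) atBot (nhds 0) :=
    tendsto_Wr_zero φt u M hM atBot hbotu hshift_bot
  have hc : 0 < -(ε^2) * α := by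
    have : 0 < ε^2 := by positivity
    nlinarith
  have stepAt : ∀ n : ℤ, Wr φt u (n+1) = Wr φt u n + (-(ε^2) * α) * (φt (n+1) * u (n+1)) := by
    intro n
    have h2 := step ε α hε φt u hpos hker heq (n + 1)
    simpa using h2
  -- Right side
  have hright : ∃ b, n₀ ≤ b ∧ Wr φt u b < 0 ∧ ∀ k, n₀ ≤ k → k ≤ b → 0 < u k := by
    by_cases hR : ∀ n, n₀ ≤ n → 0 < u n
    · refine ⟨n₀, le_refl _, ?_, fun k h1 _ => hR k h1⟩
      have h1 : Wr φt u (n₀+1) ≤ 0 := by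
        refine ge_of_tendsto hWtop ?_
        filter_upwards [eventually_ge_atTop (n₀+1)] with m hm
        exact mono ε α φt u hε hα hpos hker heq (n₀+1) m hm
          (fun k hk1 _ => hR k (by omega))
      have h2 := stepAt n₀
      have h3 : 0 < u (n₀+1) := hR (n₀+1) (by omega)
      nlinarith [mul_pos hc (mul_pos (hpos (n₀+1)) h3)]
    · push_neg at hR
      obtain ⟨lb, ⟨hlb1, hlb2⟩, hleast⟩ :=
        Int.exists_least_of_bdd (P := fun m => n₀ ≤ m ∧ u m ≤ 0)
          ⟨n₀, fun z hz => hz.1⟩ (by obtain ⟨n, h1, h2⟩ := hR; exact ⟨n, h1, h2⟩)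
      have hlt : ∀ k, n₀ ≤ k → k < lb → 0 < u k := by
        intro k h1 h2
        by_contra h
        push_neg at h
        have := hleast k ⟨h1, h⟩
        omega
      have hlbn : n₀ < lb := by
        rcases lt_or_eq_of_le hlb1 with h | h
        · exact h
        · exfalso; rw [← h] at hlb2; linarith
      refine ⟨lb - 1, by omega, ?_, fun k h1 h2 => hlt k h1 (by omega)⟩
      have hub : 0 < u (lb - 1) := hlt (lb-1) (by omega) (by omega)
      show φt (lb-1) * u (lb - 1 + 1) - φt (lb - 1 + 1) * u (lb-1) < 0
      simp only [show lb - 1 + 1 = lb from by ring]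
      nlinarith [hpos (lb-1), hpos lb, mul_pos (hpos lb) hub]
  -- Left side
  have hleft : ∃ a, a ≤ n₀ ∧ 0 < Wr φt u (a-1) ∧ ∀ k, a ≤ k → k ≤ n₀ → 0 < u k := by
    by_cases hL : ∀ n, n ≤ n₀ → 0 < u n
    · refine ⟨n₀, le_refl _, ?_, fun k _ h2 => hL k h2⟩
      have h1 : 0 ≤ Wr φt u (n₀-2) := by
        refine le_of_tendsto hWbot ?_
        filter_upwards [eventually_le_atBot (n₀-2)] with m hm
        exact mono ε α φt u hε hα hpos hker heq m (n₀-2) hm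
          (fun k _ hk2 => hL k (by omega))
      have h2 := step ε α hε φt u hpos hker heq (n₀ - 1)
      simp only [show n₀ - 1 - 1 = n₀ - 2 from by ring] at h2
      have h3 : 0 < u (n₀-1) := hL (n₀-1) (by omega)
      nlinarith [mul_pos hc (mul_pos (hpos (n₀-1)) h3)]
    · push_neg at hL
      obtain ⟨gb, ⟨hgb1, hgb2⟩, hgreat⟩ :=
        Int.exists_greatest_of_bdd (P := fun m => m ≤ n₀ ∧ u m ≤ 0)
          ⟨n₀, fun z hz => hz.1⟩ (by obtain ⟨n, h1, h2⟩ := hL; exact ⟨n, h1, h2⟩)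
      have hgt : ∀ k, gb < k → k ≤ n₀ → 0 < u k := by
        intro k h1 h2
        by_contra h
        push_neg at h
        have := hgreat k ⟨h2, h⟩
        omega
      have hgbn : gb < n₀ := by
        rcases lt_or_eq_of_le hgb1 with h | h
        · exact h
        · exfalso; rw [h] at hgb2; linarith
      refine ⟨gb + 1, by omega, ?_, fun k h1 h2 => hgt k (by omega) h2⟩
      have hub : 0 < u (gb + 1) := hgt (gb+1) (by omega) (by omega)
      show 0 < φt (gb+1-1) * u (gb+1-1+1) - φt (gb+1-1+1) * u (gb+1-1)
      simp only [show gb + 1 - 1 = gb from by ring]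
      nlinarith [hpos gb, hpos (gb+1), mul_pos (hpos gb) hub]
  obtain ⟨b, hbn, hWb, hub⟩ := hright
  obtain ⟨a, han, hWa, hua⟩ := hleft
  have hfinal : Wr φt u (a-1) ≤ Wr φt u b := by
    refine mono ε α φt u hε hα hpos hker heq (a-1) b (by omega) (fun k h1 h2 => ?_)
    rcases le_or_gt k n₀ with h | h
    · exact hua k (by omega) h
    · exact hub k (by omega) h2
  linarith

end NoNegEV

/-- for the discrete Maxwell front `φ̃`: a strictly positive bounded
sequence with `L₋φ̃ = 0`, limits `0` at `−∞` and `2/3` at `+∞`, and `φ̃ ∉ ℓ²(ℤ)`.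
Then `0` is not an `ℓ²` eigenvalue of `L₋` arising from `φ̃` (i.e. `φ̃` is not an `ℓ²`
eigenvector of eigenvalue `0`), and by positivity of `φ̃`, `L₋` has no negative
eigenvalues (`n₋ = 0`). -/
theorem Lminus_no_negative_eigenvalues (ε : ℝ) (hε : 0 < ε) (φt : ℤ → ℝ)
    (hpos : ∀ n, 0 < φt n)
    (hbdd : ∃ M : ℝ, ∀ n, |φt n| ≤ M)
    (hker : ∀ n, Lminus ε φt φt n = 0)
    (hlim_top : Filter.Tendsto φt Filter.atTop (nhds (2/3)))
    (hlim_bot : Filter.Tendsto φt Filter.atBot (nhds 0))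
    (hnotl2 : ¬ Summable (fun n : ℤ => (φt n)^2)) :
    (¬ ∃ u : ℤ → ℝ, u = φt ∧ u ≠ 0 ∧ Summable (fun n => (u n)^2) ∧
        ∀ n, Lminus ε φt u n = 0) ∧
    ¬ ∃ α : ℝ, α < 0 ∧ ∃ u : ℤ → ℝ, u ≠ 0 ∧ Summable (fun n => (u n)^2) ∧
        ∀ n, Lminus ε φt u n = α * u n := by
  constructor
  · rintro ⟨u, rfl, -, hsum, -⟩
    exact hnotl2 hsum
  · rintro ⟨α, hα, u, hne, hsum, heq⟩
    obtain ⟨n₀, hn₀⟩ := Function.ne_iff.mp hne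
    simp only [Pi.zero_apply] at hn₀
    rcases hn₀.lt_or_gt with h | h
    · -- u n₀ < 0: use -u
      have heqv : ∀ n, Lminus ε φt (fun m => -u m) n = α * (-u n) := by
        intro n
        have h0 := heq n
        unfold Lminus discLap at h0 ⊢
        linear_combination -h0
      have hsumv : Summable (fun n : ℤ => ((-u n))^2) := by
        simpa using hsum
      exact NoNegEV.no_neg ε α hε hα φt (fun m => -u m) hpos hbdd hker heqv hsumv n₀
        (by simpa using h.le.lt_of_ne (by simpa using hn₀))
    · exact NoNegEV.no_neg ε α hε hα φt u hpos hbdd hker heq hsum n₀ h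

end
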